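/- Let (c_n) be a sequence in (ℝ^d)* converging to c ∈ (ℝ^d)*. Then for every ε > 0 and every (x,y) ∈ ℝ^d × ℝ^d, there exists N₀ ∈ ℕ such that for all n ≥ N₀, π_{c_n}(x,y) ≤ ε + π_c(x,y). -/

import Mathlib

noncomputable section

/-- Configuration space `ℝ^d` with the Euclidean norm. -/
abbrev Ed (d : ℕ) := EuclideanSpace ℝ (Fin d)

/-- The point of `ℝ^d` with integer coordinates given by `r ∈ ℤ^d`. -/
def intVec (d : ℕ) (r : Fin d → ℤ) : Ed d := WithLp.toLp 2 (fun i => (r i : ℝ))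

/-- A generating function: a `C²` map `S : ℝ^d × ℝ^d → ℝ` which is `ℤ^d`-periodic for
the diagonal action and satisfies the uniform twist condition
`∑_{i,j} ∂²S/∂xᵢ∂yⱼ (x,y) ξᵢ ξⱼ ≤ -A‖ξ‖²` (expressed via the second derivative of `S`
applied to `((ξ,0),(0,ξ))`). -/
def IsGenFn {d : ℕ} (S : Ed d × Ed d → ℝ) : Prop :=
  ContDiff ℝ 2 S ∧
  (∀ (r : Fin d → ℤ) (x y : Ed d), S (x + intVec d r, y + intVec d r) = S (x, y)) ∧
  ∃ A : ℝ, 0 < A ∧ ∀ (x y ξ : Ed d),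
    iteratedFDeriv ℝ 2 S (x, y) ![(ξ, 0), (0, ξ)] ≤ -A * ‖ξ‖ ^ 2

/-- `∂₁S`, the partial differential of `S` with respect to its first variable. -/
def D1 {d : ℕ} (S : Ed d × Ed d → ℝ) (x y : Ed d) : Ed d →L[ℝ] ℝ :=
  fderiv ℝ (fun z => S (z, y)) x

/-- `∂₂S`, the partial differential of `S` with respect to its second variable. -/
def D2 {d : ℕ} (S : Ed d × Ed d → ℝ) (x y : Ed d) : Ed d →L[ℝ] ℝ :=
  fderiv ℝ (fun z => S (x, z)) y

/-- A bi-infinite sequence `(x_n)_{n∈ℤ}` is extremal if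
`∂₂S(x_{n-1}, x_n) + ∂₁S(x_n, x_{n+1}) = 0` for every `n`. -/
def IsExtremal {d : ℕ} (S : Ed d × Ed d → ℝ) (u : ℤ → Ed d) : Prop :=
  ∀ n : ℤ, D2 S (u (n - 1)) (u n) + D1 S (u n) (u (n + 1)) = 0

/-- The action `S(x_0, …, x_n)` of a finite sequence. -/
def act {d : ℕ} (S : Ed d × Ed d → ℝ) (n : ℕ) (γ : ℕ → Ed d) : ℝ :=
  ∑ k ∈ Finset.range n, S (γ k, γ (k + 1))

/-- The sequence `(x, z_1, …, z_{N-1}, y)` built from interior points `z`. -/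
def path {d : ℕ} (x y : Ed d) (N : ℕ) (z : Fin (N - 1) → Ed d) : ℕ → Ed d :=
  fun k => if h0 : k = 0 then x else if h : k < N then z ⟨k - 1, by omega⟩ else y

/-- The fixed-endpoint action `S_{x,y,N} : (x_1, …, x_{N-1}) ↦ S(x, x_1, …, x_{N-1}, y)`. -/
def fixedAct {d : ℕ} (S : Ed d × Ed d → ℝ) (x y : Ed d) (N : ℕ) :
    (Fin (N - 1) → Ed d) → ℝ :=
  fun z => act S N (path x y N z)

/-- `S` has no conjugate points: for all `x, y` and `N ≥ 2`, the fixed-endpoint action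
`S_{x,y,N}` has exactly one critical point, and attains its global minimum there. -/
def NoConjPts {d : ℕ} (S : Ed d × Ed d → ℝ) : Prop :=
  ∀ (x y : Ed d) (N : ℕ), 2 ≤ N →
    ∃ z : Fin (N - 1) → Ed d,
      fderiv ℝ (fixedAct S x y N) z = 0 ∧
      (∀ w, fixedAct S x y N z ≤ fixedAct S x y N w) ∧
      (∀ z', fderiv ℝ (fixedAct S x y N) z' = 0 → z' = z)

/-- `A_N(x,y)`: the minimum of the fixed-endpoint action `S_{x,y,N}` for `N ≥ 2`,
and `S(x,y)` for `N = 1`. -/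
def AN {d : ℕ} (S : Ed d × Ed d → ℝ) (N : ℕ) (x y : Ed d) : ℝ :=
  if N ≤ 1 then S (x, y) else sInf (Set.range (fixedAct S x y N))

/-- The minimizing holonomic value `Σ̃(S)`. -/
def holVal {d : ℕ} (S : Ed d × Ed d → ℝ) : ℝ :=
  sInf { v : ℝ | ∃ n : ℕ, 1 ≤ n ∧ ∃ γ : ℕ → Ed d,
    (∃ r : Fin d → ℤ, γ n - γ 0 = intVec d r) ∧ v = act S n γ / n }

/-- The normalized action `S̃(x_0, …, x_n) = S(x_0, …, x_n) - n Σ̃(S)`. -/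
def actTilde {d : ℕ} (S : Ed d × Ed d → ℝ) (n : ℕ) (γ : ℕ → Ed d) : ℝ :=
  act S n γ - n * holVal S

/-- The Mañé potential `π(x,y)`. -/
def manePot {d : ℕ} (S : Ed d × Ed d → ℝ) (x y : Ed d) : ℝ :=
  sInf { v : ℝ | ∃ n : ℕ, 1 ≤ n ∧ ∃ γ : ℕ → Ed d,
    γ 0 = x ∧ (∃ r : Fin d → ℤ, γ n - y = intVec d r) ∧ v = actTilde S n γ }

/-- The Aubry set `Ā(S) ⊂ ℝ^d × ℝ^d`. -/
def aubry {d : ℕ} (S : Ed d × Ed d → ℝ) : Set (Ed d × Ed d) :=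
  { p | ∀ ε > 0, ∃ n : ℕ, 1 ≤ n ∧ ∃ γ : ℕ → Ed d,
      (∃ r : Fin d → ℤ, γ n - γ 0 = intVec d r) ∧
      ‖p.1 - γ 0‖ < ε ∧ ‖p.2 - γ 1‖ < ε ∧ actTilde S n γ < ε }

/-- The generating function `S_c(x,y) = S(x,y) + c(x - y)` associated to a cohomology
class `c ∈ (ℝ^d)*`. -/
def Sc {d : ℕ} (S : Ed d × Ed d → ℝ) (c : Ed d →L[ℝ] ℝ) : Ed d × Ed d → ℝ :=
  fun p => S p + c (p.1 - p.2)



section AuxiliaryLemmas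

variable {d : ℕ} {S : Ed d × Ed d → ℝ}

lemma hasDerivAt_S_line (hC2 : ContDiff ℝ 2 S) (a b u v : Ed d) (t : ℝ) :
    HasDerivAt (fun s : ℝ => S (a + s • u, b + s • v))
      (fderiv ℝ S (a + t • u, b + t • v) (u, v)) t := by
  have hline : HasDerivAt (fun s : ℝ => ((a + s • u, b + s • v) : Ed d × Ed d)) (u, v) t := by
    have h1 : HasDerivAt (fun s : ℝ => a + s • u) u t := by
      simpa using ((hasDerivAt_id t).smul_const u).const_add a
    have h2 : HasDerivAt (fun s : ℝ => b + s • v) v t := by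
      simpa using ((hasDerivAt_id t).smul_const v).const_add b
    exact h1.prodMk h2
  exact ((hC2.differentiable (by norm_num) _).hasFDerivAt.comp_hasDerivAt t hline)

lemma hasDerivAt_DS_line (hC2 : ContDiff ℝ 2 S) (a b u v : Ed d) (q : Ed d × Ed d) (t : ℝ) :
    HasDerivAt (fun s : ℝ => fderiv ℝ S (a + s • u, b + s • v) q)
      (fderiv ℝ (fderiv ℝ S) (a + t • u, b + t • v) (u, v) q) t := by
  have hDF : ContDiff ℝ 1 (fderiv ℝ S) := hC2.fderiv_right (by norm_num)
  have hline : HasDerivAt (fun s : ℝ => ((a + s • u, b + s • v) : Ed d × Ed d)) (u, v) t := by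
    have h1 : HasDerivAt (fun s : ℝ => a + s • u) u t := by
      simpa using ((hasDerivAt_id t).smul_const u).const_add a
    have h2 : HasDerivAt (fun s : ℝ => b + s • v) v t := by
      simpa using ((hasDerivAt_id t).smul_const v).const_add b
    exact h1.prodMk h2
  have h3 : HasDerivAt (fun s : ℝ => fderiv ℝ S (a + s • u, b + s • v))
      (fderiv ℝ (fderiv ℝ S) (a + t • u, b + t • v) (u, v)) t :=
    ((hDF.differentiable one_ne_zero) _).hasFDerivAt.comp_hasDerivAt t hline
  simpa using h3.clm_apply (hasDerivAt_const t q)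

lemma twist' {A : ℝ}
    (htw : ∀ (x y ξ : Ed d), iteratedFDeriv ℝ 2 S (x, y) ![(ξ, 0), (0, ξ)] ≤ -A * ‖ξ‖ ^ 2)
    (z : Ed d × Ed d) (ξ : Ed d) :
    fderiv ℝ (fderiv ℝ S) z (ξ, 0) (0, ξ) ≤ -A * ‖ξ‖ ^ 2 := by
  have h := htw z.1 z.2 ξ
  rw [iteratedFDeriv_two_apply] at h
  simpa using h

lemma fderiv_periodic (hC2 : ContDiff ℝ 2 S)
    (per : ∀ (r : Fin d → ℤ) (x y : Ed d), S (x + intVec d r, y + intVec d r) = S (x, y))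
    (r : Fin d → ℤ) (z : Ed d × Ed d) :
    fderiv ℝ S (z + (intVec d r, intVec d r)) = fderiv ℝ S z := by
  have hfun : (fun p : Ed d × Ed d => S (p + (intVec d r, intVec d r))) = S := by
    funext p; exact per r p.1 p.2
  have h1 : HasFDerivAt (fun p : Ed d × Ed d => S (p + (intVec d r, intVec d r)))
      (fderiv ℝ S (z + (intVec d r, intVec d r))) z := by
    exact ((hC2.differentiable (by norm_num) _).hasFDerivAt.comp z
      ((hasFDerivAt_id z).add_const (intVec d r, intVec d r)))
  rw [hfun] at h1
  exact (h1.fderiv).symm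

lemma diag_bound (hC2 : ContDiff ℝ 2 S)
    (per : ∀ (r : Fin d → ℤ) (x y : Ed d), S (x + intVec d r, y + intVec d r) = S (x, y)) :
    ∃ C0 C1 : ℝ, 0 ≤ C0 ∧ 0 ≤ C1 ∧
      ∀ z : Ed d, |S (z, z)| ≤ C0 ∧ ‖fderiv ℝ S (z, z)‖ ≤ C1 := by
  set K := Metric.closedBall (0 : Ed d) (Real.sqrt d) with hKdef
  have hK : IsCompact K := isCompact_closedBall _ _
  set f : Ed d → ℝ × (Ed d × Ed d →L[ℝ] ℝ) := fun z => (S (z, z), fderiv ℝ S (z, z)) with hfdef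
  have hdiag : Continuous (fun z : Ed d => ((z, z) : Ed d × Ed d)) :=
    continuous_id.prodMk continuous_id
  have hf : Continuous f :=
    (hC2.continuous.comp hdiag).prodMk ((hC2.continuous_fderiv (by norm_num)).comp hdiag)
  obtain ⟨C, hC⟩ := hK.exists_bound_of_continuousOn hf.continuousOn
  refine ⟨max C 0, max C 0, le_max_right _ _, le_max_right _ _, ?_⟩
  intro z
  set r : Fin d → ℤ := fun i => ⌊z i⌋ with hrdef
  set w : Ed d := z - intVec d r with hwdef
  have hzw : z = w + intVec d r := by rw [hwdef]; abel
  have hwK : w ∈ K := by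
    rw [hKdef, Metric.mem_closedBall, dist_zero_right, EuclideanSpace.norm_eq]
    have hsum : ∑ i, ‖w i‖ ^ 2 ≤ (d : ℝ) := by
      have : ∀ i : Fin d, ‖w i‖ ^ 2 ≤ 1 := by
        intro i
        have hwi : w i = z i - (⌊z i⌋ : ℝ) := by simp [hwdef, hrdef, intVec]
        rw [hwi, Real.norm_eq_abs, sq_abs]
        nlinarith [Int.floor_le (z i), Int.lt_floor_add_one (z i)]
      calc ∑ i, ‖w i‖ ^ 2 ≤ ∑ _i : Fin d, (1:ℝ) := Finset.sum_le_sum fun i _ => this i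
        _ = d := by simp
    exact Real.sqrt_le_sqrt hsum
  have hfw := hC w hwK
  have hSz : S (z, z) = S (w, w) := by rw [hzw]; exact per r w w
  have hDz : fderiv ℝ S (z, z) = fderiv ℝ S (w, w) := by
    rw [hzw]
    have := fderiv_periodic hC2 per r (w, w)
    simpa [Prod.mk_add_mk] using this
  constructor
  · rw [hSz]
    have h1 : ‖(f w).1‖ ≤ ‖f w‖ := norm_fst_le (f w)
    rw [← Real.norm_eq_abs]
    exact le_trans (le_trans h1 hfw) (le_max_left _ _)
  · rw [hDz]
    have h1 : ‖(f w).2‖ ≤ ‖f w‖ := norm_snd_le (f w)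
    exact le_trans (le_trans h1 hfw) (le_max_left _ _)

set_option maxHeartbeats 1000000 in
lemma quad_lb (hC2 : ContDiff ℝ 2 S)
    (per : ∀ (r : Fin d → ℤ) (x y : Ed d), S (x + intVec d r, y + intVec d r) = S (x, y))
    {A : ℝ} (hA : 0 < A)
    (htw : ∀ (x y ξ : Ed d), iteratedFDeriv ℝ 2 S (x, y) ![(ξ, 0), (0, ξ)] ≤ -A * ‖ξ‖ ^ 2) :
    ∃ C0 C1 : ℝ, 0 ≤ C0 ∧ 0 ≤ C1 ∧ (∀ z : Ed d, |S (z, z)| ≤ C0) ∧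
      ∀ x y : Ed d, A / 2 * ‖y - x‖ ^ 2 - C1 * ‖y - x‖ - C0 ≤ S (x, y) := by
  obtain ⟨C0, C1, hC0, hC1, hdiag⟩ := diag_bound hC2 per
  refine ⟨C0, C1, hC0, hC1, fun z => (hdiag z).1, ?_⟩
  intro x y
  set u : Ed d := y - x with hu
  have key : S (x, x) - C1 * ‖u‖ + A / 2 * ‖u‖ ^ 2 ≤ S (x, x + u) := by
    -- h t = S (x, x + t • u)
    have hder : ∀ t : ℝ, HasDerivAt (fun t : ℝ => S (x, x + t • u))
        (fderiv ℝ S (x, x + t • u) (0, u)) t := by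
      intro t
      have := hasDerivAt_S_line hC2 x x 0 u t
      simpa using this
    have hstep1 : ∀ t ∈ Set.Icc (0:ℝ) 1,
        -(C1 * ‖u‖) + A * t * ‖u‖ ^ 2 ≤ fderiv ℝ S (x, x + t • u) (0, u) := by
      intro t ht
      set w : ℝ → ℝ := fun s => fderiv ℝ S (x + s • (t • u), x + t • u) ((0 : Ed d), u)
        with hwdef
      have hw : ∀ s : ℝ, HasDerivAt w
          (fderiv ℝ (fderiv ℝ S) (x + s • (t • u), x + t • u) (t • u, 0) ((0 : Ed d), u)) s := by
        intro s
        have := hasDerivAt_DS_line hC2 x (x + t • u) (t • u) 0 ((0 : Ed d), u) s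
        simpa using this
      have hwd : ∀ s : ℝ, deriv w s ≤ -(A * t * ‖u‖ ^ 2) := by
        intro s
        rw [(hw s).deriv]
        have hsm : ((t • u, (0 : Ed d)) : Ed d × Ed d) = t • ((u, 0) : Ed d × Ed d) := by
          simp [Prod.smul_mk]
        rw [hsm, map_smul]
        have htw' := twist' htw (x + s • (t • u), x + t • u) u
        have := mul_le_mul_of_nonneg_left htw' ht.1
        calc (t • fderiv ℝ (fderiv ℝ S) (x + s • (t • u), x + t • u) ((u, 0) : Ed d × Ed d))
              ((0 : Ed d), u)
            = t * fderiv ℝ (fderiv ℝ S) (x + s • (t • u), x + t • u) ((u, 0) : Ed d × Ed d)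
              ((0 : Ed d), u) := rfl
          _ ≤ t * (-A * ‖u‖ ^ 2) := this
          _ = -(A * t * ‖u‖ ^ 2) := by ring
      have hanti : Antitone (fun s => w s + A * t * ‖u‖ ^ 2 * s) := by
        apply antitone_of_deriv_nonpos
        · intro s
          exact ((hw s).differentiableAt.add (((hasDerivAt_id s).const_mul
            (A * t * ‖u‖ ^ 2)).differentiableAt))
        · intro s
          have hD : HasDerivAt (fun s => w s + A * t * ‖u‖ ^ 2 * s)
              (deriv w s + A * t * ‖u‖ ^ 2) s := by
            have h2 : HasDerivAt (fun s : ℝ => A * t * ‖u‖ ^ 2 * s) (A * t * ‖u‖ ^ 2) s := by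
              simpa using (hasDerivAt_id s).const_mul (A * t * ‖u‖ ^ 2)
            exact ((hw s).deriv ▸ (hw s)).add h2
          rw [hD.deriv]
          linarith [hwd s]
      have hmono := hanti (le_of_lt one_pos : (0:ℝ) ≤ 1)
      simp only at hmono
      have hw0 : w 0 = fderiv ℝ S (x, x + t • u) ((0 : Ed d), u) := by
        simp [hwdef]
      have hw1bd : -(C1 * ‖u‖) ≤ w 1 := by
        have h1 : w 1 = fderiv ℝ S (x + t • u, x + t • u) ((0 : Ed d), u) := by
          simp [hwdef]
        have h2 : |fderiv ℝ S (x + t • u, x + t • u) ((0 : Ed d), u)| ≤ C1 * ‖u‖ := by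
          have h3 := (fderiv ℝ S (x + t • u, x + t • u)).le_opNorm ((0 : Ed d), u)
          have h4 : ‖((0 : Ed d), u)‖ = ‖u‖ := by
            simp [Prod.norm_def]
          rw [h4] at h3
          rw [← Real.norm_eq_abs]
          exact le_trans h3 (mul_le_mul_of_nonneg_right (hdiag _).2 (norm_nonneg u))
        rw [h1]
        linarith [abs_le.mp h2]
      rw [← hw0]
      have : w 1 + A * t * ‖u‖ ^ 2 * 1 ≤ w 0 + A * t * ‖u‖ ^ 2 * 0 := hmono
      linarith
    -- integrate over [0,1]
    have hq : MonotoneOn (fun t : ℝ => S (x, x + t • u) + C1 * ‖u‖ * t - A / 2 * ‖u‖ ^ 2 * t ^ 2)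
        (Set.Icc (0:ℝ) 1) := by
      have hqd : ∀ t : ℝ, HasDerivAt
          (fun t : ℝ => S (x, x + t • u) + C1 * ‖u‖ * t - A / 2 * ‖u‖ ^ 2 * t ^ 2)
          (fderiv ℝ S (x, x + t • u) (0, u) + C1 * ‖u‖ - A / 2 * ‖u‖ ^ 2 * (2 * t)) t := by
        intro t
        have h1 : HasDerivAt (fun t : ℝ => C1 * ‖u‖ * t) (C1 * ‖u‖) t := by
          simpa using (hasDerivAt_id t).const_mul (C1 * ‖u‖)
        have h2 : HasDerivAt (fun t : ℝ => A / 2 * ‖u‖ ^ 2 * t ^ 2)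
            (A / 2 * ‖u‖ ^ 2 * (2 * t)) t := by
          have := ((hasDerivAt_pow 2 t).const_mul (A / 2 * ‖u‖ ^ 2))
          simpa [mul_comm, mul_assoc, mul_left_comm] using this
        exact ((hder t).add h1).sub h2
      apply monotoneOn_of_deriv_nonneg (convex_Icc 0 1)
      · intro t ht
        exact (hqd t).differentiableAt.continuousAt.continuousWithinAt
      · intro t ht
        exact (hqd t).differentiableAt.differentiableWithinAt
      · intro t ht
        rw [interior_Icc] at ht
        rw [(hqd t).deriv]
        have := hstep1 t ⟨le_of_lt ht.1, le_of_lt ht.2⟩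
        nlinarith [this]
    have h01 := hq (Set.mem_Icc.mpr ⟨le_refl 0, zero_le_one⟩)
      (Set.mem_Icc.mpr ⟨zero_le_one, le_refl 1⟩) zero_le_one
    simp only [zero_smul, add_zero, one_smul, mul_zero, mul_one] at h01
    nlinarith [h01]
  have hxy : x + u = y := by rw [hu]; abel
  rw [hxy] at key
  have hSxx := abs_le.mp (hdiag x).1
  linarith [key, hSxx.1]


end AuxiliaryLemmas

/-- The holonomic set whose infimum is `holVal`. -/
def hset {d : ℕ} (T : Ed d × Ed d → ℝ) : Set ℝ :=
  { v : ℝ | ∃ n : ℕ, 1 ≤ n ∧ ∃ γ : ℕ → Ed d,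
    (∃ r : Fin d → ℤ, γ n - γ 0 = intVec d r) ∧ v = act T n γ / n }

lemma holVal_eq_sInf_hset {d : ℕ} (T : Ed d × Ed d → ℝ) : holVal T = sInf (hset T) := rfl

/-- The Mañé set whose infimum is `manePot`. -/
def mset {d : ℕ} (T : Ed d × Ed d → ℝ) (x y : Ed d) : Set ℝ :=
  { v : ℝ | ∃ n : ℕ, 1 ≤ n ∧ ∃ γ : ℕ → Ed d,
    γ 0 = x ∧ (∃ r : Fin d → ℤ, γ n - y = intVec d r) ∧ v = actTilde T n γ }

lemma manePot_eq_sInf_mset {d : ℕ} (T : Ed d × Ed d → ℝ) (x y : Ed d) :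
    manePot T x y = sInf (mset T x y) := rfl

lemma intVec_zero (d : ℕ) : intVec d (fun _ => 0) = 0 := by
  ext i; simp [intVec]

variable {d : ℕ} {S : Ed d × Ed d → ℝ}

lemma hset_nonempty (T : Ed d × Ed d → ℝ) : (hset (d := d) T).Nonempty := by
  refine ⟨act T 1 (fun _ => 0) / 1, 1, le_rfl, fun _ => (0 : Ed d), ⟨fun _ => 0, ?_⟩, by norm_num⟩
  rw [intVec_zero]; simp

lemma mset_nonempty (T : Ed d × Ed d → ℝ) (x y : Ed d) : (mset T x y).Nonempty := by
  refine ⟨actTilde T 1 (fun k => if k = 0 then x else y), 1, le_rfl,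
    fun k => if k = 0 then x else y, by simp, ⟨fun _ => 0, ?_⟩, rfl⟩
  rw [intVec_zero]; simp

/-- Telescoping identity for the action of `Sc S c`. -/
lemma act_Sc (c : Ed d →L[ℝ] ℝ) (n : ℕ) (γ : ℕ → Ed d) :
    act (Sc S c) n γ = act S n γ + (c (γ 0) - c (γ n)) := by
  have h1 : ∀ k, Sc S c (γ k, γ (k + 1)) = S (γ k, γ (k + 1)) + (c (γ k) - c (γ (k + 1))) := by
    intro k; simp [Sc, map_sub]
  calc act (Sc S c) n γ
      = ∑ k ∈ Finset.range n, (S (γ k, γ (k + 1)) + (c (γ k) - c (γ (k + 1)))) := by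
        unfold act; exact Finset.sum_congr rfl fun k _ => h1 k
    _ = act S n γ + ∑ k ∈ Finset.range n, (c (γ k) - c (γ (k + 1))) := by
        rw [Finset.sum_add_distrib]; rfl
    _ = act S n γ + (c (γ 0) - c (γ n)) := by
        rw [Finset.sum_range_sub' (fun k => c (γ k)) n]

section quad

variable {A C0 C1 : ℝ}

/-- Lower bound on the action of `S` from the quadratic pointwise bound. -/
lemma act_lb (hA : 0 < A) (hC0 : 0 ≤ C0) (hC1 : 0 ≤ C1)
    (hq : ∀ x y : Ed d, A / 2 * ‖y - x‖ ^ 2 - C1 * ‖y - x‖ - C0 ≤ S (x, y))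
    (n : ℕ) (hn : 1 ≤ n) (γ : ℕ → Ed d) :
    A / 4 * ‖γ n - γ 0‖ ^ 2 / n - n * (C0 + C1 ^ 2 / A) ≤ act S n γ := by
  set a : ℕ → ℝ := fun k => ‖γ (k + 1) - γ k‖ with hadef
  have hstep : ∀ k, A / 4 * a k ^ 2 - (C0 + C1 ^ 2 / A) ≤ S (γ k, γ (k + 1)) := by
    intro k
    have h := hq (γ k) (γ (k + 1))
    have h2 : C1 * a k ≤ A / 4 * a k ^ 2 + C1 ^ 2 / A := by
      have heq : A / 4 * a k ^ 2 - C1 * a k + C1 ^ 2 / A = (A * a k - 2 * C1) ^ 2 / (4 * A) := by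
        field_simp; ring
      have hpos : 0 ≤ (A * a k - 2 * C1) ^ 2 / (4 * A) := by positivity
      linarith [heq ▸ hpos]
    simp only [hadef]
    nlinarith [h]
  have hsum : A / 4 * (∑ k ∈ Finset.range n, a k ^ 2) - n * (C0 + C1 ^ 2 / A) ≤ act S n γ := by
    have := Finset.sum_le_sum (fun k (_ : k ∈ Finset.range n) => hstep k)
    unfold act
    calc A / 4 * (∑ k ∈ Finset.range n, a k ^ 2) - n * (C0 + C1 ^ 2 / A)
        = ∑ k ∈ Finset.range n, (A / 4 * a k ^ 2 - (C0 + C1 ^ 2 / A)) := by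
          rw [Finset.sum_sub_distrib, ← Finset.mul_sum, Finset.sum_const, Finset.card_range,
            nsmul_eq_mul]
      _ ≤ _ := this
  have htel : ‖γ n - γ 0‖ ≤ ∑ k ∈ Finset.range n, a k := by
    have h0 : γ n - γ 0 = ∑ k ∈ Finset.range n, (γ (k + 1) - γ k) := by
      rw [Finset.sum_range_sub (fun k => γ k) n]
    rw [h0]
    exact norm_sum_le _ _
  have hcs : (∑ k ∈ Finset.range n, a k) ^ 2 ≤ n * ∑ k ∈ Finset.range n, a k ^ 2 := by
    have := sq_sum_le_card_mul_sum_sq (s := Finset.range n) (f := a)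
    simpa [Finset.card_range] using this
  have hnpos : (0 : ℝ) < n := by exact_mod_cast Nat.lt_of_lt_of_le Nat.zero_lt_one hn
  have hD2 : ‖γ n - γ 0‖ ^ 2 ≤ n * ∑ k ∈ Finset.range n, a k ^ 2 := by
    have h1 : ‖γ n - γ 0‖ ^ 2 ≤ (∑ k ∈ Finset.range n, a k) ^ 2 :=
      pow_le_pow_left₀ (norm_nonneg _) htel 2
    linarith [hcs]
  have hfinal : A / 4 * ‖γ n - γ 0‖ ^ 2 / n ≤ A / 4 * ∑ k ∈ Finset.range n, a k ^ 2 := by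
    rw [div_le_iff₀ hnpos]
    nlinarith [hD2, hA]
  linarith [hsum]

end quad

section estimates

variable {A C0 C1 : ℝ}

lemma hs_pair (hA : 0 < A) (hC0 : 0 ≤ C0) (hC1 : 0 ≤ C1)
    (hq : ∀ x y : Ed d, A / 2 * ‖y - x‖ ^ 2 - C1 * ‖y - x‖ - C0 ≤ S (x, y))
    (c c' : Ed d →L[ℝ] ℝ) {v' : ℝ} (hv' : v' ∈ hset (Sc S c')) :
    ∃ v t : ℝ, v ∈ hset (Sc S c) ∧ 0 ≤ t ∧ |v' - v| ≤ ‖c' - c‖ * t ∧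
      A / 4 * t ^ 2 - ‖c'‖ * t - (C0 + C1 ^ 2 / A) ≤ v' := by
  obtain ⟨n, hn, γ, ⟨r, hr⟩, hv'eq⟩ := hv'
  have hnpos : (0 : ℝ) < n := by exact_mod_cast Nat.lt_of_lt_of_le Nat.zero_lt_one hn
  refine ⟨act (Sc S c) n γ / n, ‖γ n - γ 0‖ / n, ⟨n, hn, γ, ⟨r, hr⟩, rfl⟩,
    by positivity, ?_, ?_⟩
  · rw [hv'eq, act_Sc, act_Sc (c := c)]
    have heq : (act S n γ + (c' (γ 0) - c' (γ n))) / n - (act S n γ + (c (γ 0) - c (γ n))) / n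
        = ((c' - c) (γ 0 - γ n)) / n := by
      rw [div_sub_div_same]
      simp only [map_sub, ContinuousLinearMap.sub_apply]
      ring
    rw [heq, abs_div, abs_of_pos hnpos]
    have hb : |(c' - c) (γ 0 - γ n)| ≤ ‖c' - c‖ * ‖γ n - γ 0‖ := by
      have h1 := (c' - c).le_opNorm (γ 0 - γ n)
      rw [Real.norm_eq_abs] at h1
      rw [norm_sub_rev (γ n) (γ 0)]
      exact h1
    rw [← mul_div_assoc]
    exact div_le_div_of_nonneg_right hb hnpos.le
  · rw [hv'eq, le_div_iff₀ hnpos]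
    have hact := act_lb hA hC0 hC1 hq n hn γ
    have hc'bd : -(‖c'‖ * ‖γ n - γ 0‖) ≤ c' (γ 0) - c' (γ n) := by
      have h1 := c'.le_opNorm (γ 0 - γ n)
      rw [Real.norm_eq_abs] at h1
      have h2 := abs_le.mp h1
      rw [norm_sub_rev (γ 0) (γ n)] at h2
      simp only [map_sub] at h2
      linarith [h2.1]
    rw [act_Sc]
    have hexp : (A / 4 * (‖γ n - γ 0‖ / n) ^ 2 - ‖c'‖ * (‖γ n - γ 0‖ / n)
          - (C0 + C1 ^ 2 / A)) * n
        = A / 4 * ‖γ n - γ 0‖ ^ 2 / n - ‖c'‖ * ‖γ n - γ 0‖ - n * (C0 + C1 ^ 2 / A) := by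
      field_simp
    rw [hexp]
    linarith

lemma hs_lb (hA : 0 < A) (hC0 : 0 ≤ C0) (hC1 : 0 ≤ C1)
    (hq : ∀ x y : Ed d, A / 2 * ‖y - x‖ ^ 2 - C1 * ‖y - x‖ - C0 ≤ S (x, y))
    (c : Ed d →L[ℝ] ℝ) :
    ∀ v ∈ hset (Sc S c), -(‖c‖ ^ 2 / A + (C0 + C1 ^ 2 / A)) ≤ v := by
  intro v hv
  obtain ⟨w, t, _, ht0, _, hlb⟩ := hs_pair hA hC0 hC1 hq c c hv
  have hamgm : 0 ≤ A / 4 * t ^ 2 - ‖c‖ * t + ‖c‖ ^ 2 / A := by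
    have heq : A / 4 * t ^ 2 - ‖c‖ * t + ‖c‖ ^ 2 / A = (A * t - 2 * ‖c‖) ^ 2 / (4 * A) := by
      field_simp; ring
    rw [heq]; positivity
  linarith

lemma hs_bddBelow (hA : 0 < A) (hC0 : 0 ≤ C0) (hC1 : 0 ≤ C1)
    (hq : ∀ x y : Ed d, A / 2 * ‖y - x‖ ^ 2 - C1 * ‖y - x‖ - C0 ≤ S (x, y))
    (c : Ed d →L[ℝ] ℝ) : BddBelow (hset (Sc S c)) :=
  ⟨-(‖c‖ ^ 2 / A + (C0 + C1 ^ 2 / A)), fun v hv => hs_lb hA hC0 hC1 hq c v hv⟩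

lemma S00_mem_hset (c : Ed d →L[ℝ] ℝ) : S (0, 0) ∈ hset (Sc S c) := by
  refine ⟨1, le_rfl, fun _ => (0 : Ed d), ⟨fun _ => 0, by rw [intVec_zero]; simp⟩, ?_⟩
  simp [act, Sc]

lemma holVal_le_S00 (hA : 0 < A) (hC0 : 0 ≤ C0) (hC1 : 0 ≤ C1)
    (hq : ∀ x y : Ed d, A / 2 * ‖y - x‖ ^ 2 - C1 * ‖y - x‖ - C0 ≤ S (x, y))
    (c : Ed d →L[ℝ] ℝ) : holVal (Sc S c) ≤ S (0, 0) :=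
  csInf_le (hs_bddBelow hA hC0 hC1 hq c) (S00_mem_hset c)

lemma hol_down (hA : 0 < A) (hC0 : 0 ≤ C0) (hC1 : 0 ≤ C1)
    (hq : ∀ x y : Ed d, A / 2 * ‖y - x‖ ^ 2 - C1 * ‖y - x‖ - C0 ≤ S (x, y))
    (c c' : Ed d →L[ℝ] ℝ) (R : ℝ) (hR0 : 0 ≤ R)
    (hfar : ∀ t : ℝ, R ≤ t → holVal (Sc S c) ≤ A / 4 * t ^ 2 - ‖c'‖ * t - (C0 + C1 ^ 2 / A)) :
    holVal (Sc S c) - R * ‖c' - c‖ ≤ holVal (Sc S c') := by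
  rw [holVal_eq_sInf_hset (Sc S c')]
  apply le_csInf (hset_nonempty _)
  intro v' hv'
  obtain ⟨v, t, hv, ht0, hclose, hlb⟩ := hs_pair hA hC0 hC1 hq c c' hv'
  have hvge : holVal (Sc S c) ≤ v := csInf_le (hs_bddBelow hA hC0 hC1 hq c) hv
  by_cases hcase : t ≤ R
  · have h1 : |v' - v| ≤ ‖c' - c‖ * R :=
      le_trans hclose (mul_le_mul_of_nonneg_left hcase (norm_nonneg _))
    have h2 := abs_le.mp h1
    have : ‖c' - c‖ * R = R * ‖c' - c‖ := mul_comm _ _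
    linarith [h2.1]
  · have hRt : R ≤ t := le_of_lt (lt_of_not_ge hcase)
    have := hfar t hRt
    have hnn : 0 ≤ R * ‖c' - c‖ := mul_nonneg hR0 (norm_nonneg _)
    linarith

lemma mset_lb (hA : 0 < A) (hC0 : 0 ≤ C0) (hC1 : 0 ≤ C1)
    (hq : ∀ x y : Ed d, A / 2 * ‖y - x‖ ^ 2 - C1 * ‖y - x‖ - C0 ≤ S (x, y))
    (per : ∀ (r : Fin d → ℤ) (x y : Ed d), S (x + intVec d r, y + intVec d r) = S (x, y))
    (c : Ed d →L[ℝ] ℝ) (x y : Ed d) :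
    ∀ v ∈ mset (Sc S c) x y, holVal (Sc S c) - S (y, x) - c (y - x) ≤ v := by
  intro v hv
  obtain ⟨n, hn, γ, h0, ⟨r, hr⟩, hveq⟩ := hv
  have hγn : γ n = y + intVec d r := by
    have : γ n - y = intVec d r := hr
    linear_combination (norm := module) this
  set γ' : ℕ → Ed d := fun k => if k ≤ n then γ k else x + intVec d r with hγ'def
  have hγ'n : γ' n = y + intVec d r := by simp [hγ'def, hγn]
  have hγ'n1 : γ' (n + 1) = x + intVec d r := by
    have : ¬ (n + 1 ≤ n) := by omega
    simp [hγ'def, this]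
  have hγ'0 : γ' 0 = x := by simp [hγ'def, h0]
  have hactsplit : act (Sc S c) (n + 1) γ' = act (Sc S c) n γ + Sc S c (γ' n, γ' (n + 1)) := by
    unfold act
    rw [Finset.sum_range_succ]
    congr 1
    apply Finset.sum_congr rfl
    intro k hk
    have hk' : k < n := Finset.mem_range.mp hk
    have e1 : γ' k = γ k := by simp [hγ'def, (by omega : k ≤ n)]
    have e2 : γ' (k + 1) = γ (k + 1) := by simp [hγ'def, (by omega : k + 1 ≤ n)]
    rw [e1, e2]
  have hlast : Sc S c (γ' n, γ' (n + 1)) = S (y, x) + c (y - x) := by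
    rw [hγ'n, hγ'n1]
    unfold Sc
    have e1 : S (y + intVec d r, x + intVec d r) = S (y, x) := per r y x
    have e2 : (y + intVec d r) - (x + intVec d r) = y - x := by abel
    rw [e1, e2]
  -- the extended loop is holonomic
  have hmem : act (Sc S c) (n + 1) γ' / (n + 1 : ℕ) ∈ hset (Sc S c) := by
    refine ⟨n + 1, by omega, γ', ⟨r, ?_⟩, rfl⟩
    rw [hγ'n1, hγ'0]
    abel
  have hinf : holVal (Sc S c) ≤ act (Sc S c) (n + 1) γ' / (n + 1 : ℕ) :=
    csInf_le (hs_bddBelow hA hC0 hC1 hq c) hmem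
  have hnpos : (0 : ℝ) < ((n + 1 : ℕ) : ℝ) := by positivity
  have hmul : ((n + 1 : ℕ) : ℝ) * holVal (Sc S c) ≤ act (Sc S c) (n + 1) γ' := by
    rw [le_div_iff₀ hnpos] at hinf
    linarith [hinf]
  rw [hveq]
  unfold actTilde
  have hcast : ((n + 1 : ℕ) : ℝ) = (n : ℝ) + 1 := by push_cast; ring
  rw [hcast] at hmul
  rw [hactsplit, hlast] at hmul
  linarith

end estimates


/-- If `(c_n)` converges to `c` in `(ℝ^d)*`, then for every `ε > 0` and every `(x,y)`,
one has `π_{c_n}(x,y) ≤ ε + π_c(x,y)` for all large enough `n`. -/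
theorem stmt_15 (d : ℕ) (hd : 1 ≤ d) (S : Ed d × Ed d → ℝ) (hS : IsGenFn S)
    (c : ℕ → (Ed d →L[ℝ] ℝ)) (c₀ : Ed d →L[ℝ] ℝ)
    (hc : Filter.Tendsto c Filter.atTop (nhds c₀)) :
    ∀ ε > (0 : ℝ), ∀ x y : Ed d, ∃ N₀ : ℕ, ∀ n : ℕ, N₀ ≤ n →
      manePot (Sc S (c n)) x y ≤ ε + manePot (Sc S c₀) x y := by
  obtain ⟨hC2, per, A, hA, htw⟩ := hS
  obtain ⟨C0, C1, hC0, hC1, hdiag, hq⟩ := quad_lb hC2 per hA htw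
  intro ε hε x y
  obtain ⟨K, hKdef⟩ : ∃ K : ℝ, K = ‖c₀‖ + 1 := ⟨_, rfl⟩
  have hK0 : 0 < K := by rw [hKdef]; positivity
  obtain ⟨U, hUdef⟩ : ∃ U : ℝ, U = S (0, 0) := ⟨_, rfl⟩
  have hU0 : -C0 ≤ U := hUdef ▸ (abs_le.mp (hdiag 0)).1
  have hrad0 : 0 < U + 2 * K ^ 2 / A + (C0 + C1 ^ 2 / A) + 1 := by
    have h2 : 0 ≤ 2 * K ^ 2 / A := by positivity
    have h3 : 0 ≤ C1 ^ 2 / A := by positivity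
    linarith
  obtain ⟨rad, hraddef⟩ : ∃ rad : ℝ, rad = 8 * (U + 2 * K ^ 2 / A + (C0 + C1 ^ 2 / A) + 1) / A := ⟨_, rfl⟩
  have hrad : 0 < rad := by
    rw [hraddef]; exact div_pos (by linarith) hA
  obtain ⟨R, hRdef⟩ : ∃ R : ℝ, R = Real.sqrt rad := ⟨_, rfl⟩
  have hR0 : 0 ≤ R := hRdef ▸ Real.sqrt_nonneg _
  have hRsq : R ^ 2 = rad := by rw [hRdef]; exact Real.sq_sqrt hrad.le
  have hfar : ∀ c' : Ed d →L[ℝ] ℝ, ‖c'‖ ≤ K → ∀ t : ℝ, R ≤ t →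
      holVal (Sc S c₀) ≤ A / 4 * t ^ 2 - ‖c'‖ * t - (C0 + C1 ^ 2 / A) := by
    intro c' hc' t hRt
    have ht0 : 0 ≤ t := le_trans hR0 hRt
    have h1 : holVal (Sc S c₀) ≤ U := hUdef ▸ holVal_le_S00 hA hC0 hC1 hq c₀
    have key1 : ‖c'‖ * t ≤ K * t := mul_le_mul_of_nonneg_right hc' ht0
    have key2 : K * t ≤ A / 8 * t ^ 2 + 2 * K ^ 2 / A := by
      have heq : A / 8 * t ^ 2 - K * t + 2 * K ^ 2 / A = (A * t - 4 * K) ^ 2 / (8 * A) := by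
        field_simp; ring
      have hpos : 0 ≤ (A * t - 4 * K) ^ 2 / (8 * A) := by positivity
      linarith [heq ▸ hpos]
    have key3 : R ^ 2 ≤ t ^ 2 := pow_le_pow_left₀ hR0 hRt 2
    have key4 : A / 8 * R ^ 2 ≤ A / 8 * t ^ 2 :=
      mul_le_mul_of_nonneg_left key3 (by positivity)
    have key5 : A / 8 * R ^ 2 = U + 2 * K ^ 2 / A + (C0 + C1 ^ 2 / A) + 1 := by
      rw [hRsq, hraddef]; field_simp
    have step1 : U + 1 ≤ A / 8 * t ^ 2 - 2 * K ^ 2 / A - (C0 + C1 ^ 2 / A) := by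
      linarith
    have step2 : A / 8 * t ^ 2 - 2 * K ^ 2 / A - (C0 + C1 ^ 2 / A)
        ≤ A / 4 * t ^ 2 - ‖c'‖ * t - (C0 + C1 ^ 2 / A) := by
      have hsplit : A / 4 * t ^ 2 = A / 8 * t ^ 2 + A / 8 * t ^ 2 := by ring
      linarith
    linarith
  obtain ⟨v₀, hv₀mem, hv₀lt⟩ :=
    Real.lt_sInf_add_pos (mset_nonempty (Sc S c₀) x y) (half_pos hε)
  have hv₀lt' : v₀ < manePot (Sc S c₀) x y + ε / 2 := by
    rw [manePot_eq_sInf_mset]; exact hv₀lt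
  obtain ⟨m, hm, γ, hγ0, ⟨r, hγr⟩, hv₀eq⟩ := hv₀mem
  obtain ⟨L, hLdef⟩ : ∃ L : ℝ, L = ‖γ 0 - γ m‖ := ⟨_, rfl⟩
  have hL0 : 0 ≤ L := hLdef ▸ norm_nonneg _
  have hmR0 : 0 ≤ (m : ℝ) * R := mul_nonneg (Nat.cast_nonneg m) hR0
  obtain ⟨Q, hQdef⟩ : ∃ Q : ℝ, Q = L + (m : ℝ) * R + 1 := ⟨_, rfl⟩
  have hQ0 : 0 < Q := by rw [hQdef]; linarith
  obtain ⟨η, hηdef⟩ : ∃ η : ℝ, η = min 1 (ε / 2 / Q) := ⟨_, rfl⟩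
  have hη0 : 0 < η := hηdef ▸ lt_min one_pos (by positivity)
  obtain ⟨N₀, hN₀⟩ := Metric.tendsto_atTop.mp hc η hη0
  refine ⟨N₀, fun n hn => ?_⟩
  have hΔ : ‖c n - c₀‖ ≤ η := le_of_lt (by rw [← dist_eq_norm]; exact hN₀ n hn)
  have hΔ0 : 0 ≤ ‖c n - c₀‖ := norm_nonneg _
  have hΔ1 : ‖c n - c₀‖ ≤ 1 := le_trans hΔ (hηdef ▸ min_le_left _ _)
  have hcnK : ‖c n‖ ≤ K := by
    have h1 : c n = (c n - c₀) + c₀ := by abel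
    calc ‖c n‖ = ‖(c n - c₀) + c₀‖ := by rw [← h1]
      _ ≤ ‖c n - c₀‖ + ‖c₀‖ := norm_add_le _ _
      _ ≤ K := by rw [hKdef]; linarith
  have hb2 : holVal (Sc S c₀) - R * ‖c n - c₀‖ ≤ holVal (Sc S (c n)) :=
    hol_down hA hC0 hC1 hq c₀ (c n) R hR0 (hfar (c n) hcnK)
  have hmemn : actTilde (Sc S (c n)) m γ ∈ mset (Sc S (c n)) x y :=
    ⟨m, hm, γ, hγ0, ⟨r, hγr⟩, rfl⟩
  have hbddn : BddBelow (mset (Sc S (c n)) x y) :=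
    ⟨holVal (Sc S (c n)) - S (y, x) - (c n) (y - x),
      fun v hv => mset_lb hA hC0 hC1 hq per (c n) x y v hv⟩
  have hle : manePot (Sc S (c n)) x y ≤ actTilde (Sc S (c n)) m γ := by
    rw [manePot_eq_sInf_mset]; exact csInf_le hbddn hmemn
  have hdiff : actTilde (Sc S (c n)) m γ
      ≤ v₀ + ‖c n - c₀‖ * L + (m : ℝ) * (R * ‖c n - c₀‖) := by
    have e1 : actTilde (Sc S (c n)) m γ
        = act S m γ + ((c n) (γ 0) - (c n) (γ m)) - m * holVal (Sc S (c n)) := by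
      unfold actTilde; rw [act_Sc]
    have e2 : v₀ = act S m γ + (c₀ (γ 0) - c₀ (γ m)) - m * holVal (Sc S c₀) := by
      rw [hv₀eq]; unfold actTilde; rw [act_Sc]
    have hb1 : ((c n) (γ 0) - (c n) (γ m)) - (c₀ (γ 0) - c₀ (γ m)) ≤ ‖c n - c₀‖ * L := by
      have h1 := (c n - c₀).le_opNorm (γ 0 - γ m)
      rw [Real.norm_eq_abs] at h1
      have h2 := (abs_le.mp h1).2
      have h3 : (c n - c₀) (γ 0 - γ m)
          = ((c n) (γ 0) - (c n) (γ m)) - (c₀ (γ 0) - c₀ (γ m)) := by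
        simp only [map_sub, ContinuousLinearMap.sub_apply]; ring
      rw [h3] at h2
      rw [hLdef]
      exact h2
    have hb2' : (m : ℝ) * (holVal (Sc S c₀) - holVal (Sc S (c n)))
        ≤ (m : ℝ) * (R * ‖c n - c₀‖) :=
      mul_le_mul_of_nonneg_left (by linarith) (Nat.cast_nonneg m)
    linarith [e1.le, e2.le, e1.ge, e2.ge]
  have hnum : ‖c n - c₀‖ * L + (m : ℝ) * (R * ‖c n - c₀‖) ≤ ε / 2 := by
    have h1 : ‖c n - c₀‖ * L + (m : ℝ) * (R * ‖c n - c₀‖)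
        = ‖c n - c₀‖ * (L + (m : ℝ) * R) := by ring
    have h2 : ‖c n - c₀‖ * (L + (m : ℝ) * R) ≤ η * Q :=
      mul_le_mul hΔ (by rw [hQdef]; linarith) (by linarith) hη0.le
    have h3 : η * Q ≤ ε / 2 := by
      have h4 : η ≤ ε / 2 / Q := hηdef ▸ min_le_right _ _
      have h5 := mul_le_mul_of_nonneg_right h4 hQ0.le
      rwa [div_mul_cancel₀ _ (ne_of_gt hQ0)] at h5
    rw [h1]; exact le_trans h2 h3
  linarith

end
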